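/- For every integer n ≥ 1, the n-th Catalan number satisfies the identity n · c_n = Σ_{k=1}^{⌊(n+1)/2⌋} C(n,k) · C(n-k, k-1) · 2^{n-2k+1}, where c_n = (1/(n+1))·C(2n,n). -/

import Mathlib

open Polynomial Finset

private lemma coeff_one_add_X_sq_pow (m j : ℕ) :
    ((1 + X ^ 2 : Polynomial ℕ) ^ m).coeff j =
      if 2 ∣ j then m.choose (j / 2) else 0 := by
  have h : (1 + X ^ 2 : Polynomial ℕ) ^ m = expand ℕ 2 ((1 + X) ^ m) := by
    rw [map_pow, map_add, map_one, expand_X]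
  rw [h, Polynomial.coeff_expand (by norm_num)]
  split <;> simp [coeff_one_add_X_pow]

private lemma sum_eq_choose (n : ℕ) (hn : 1 ≤ n) :
    (∑ k ∈ Finset.Icc 1 ((n + 1) / 2),
        Nat.choose n k * Nat.choose (n - k) (k - 1) * 2 ^ (n + 1 - 2 * k)) =
      (2 * n).choose (n + 1) := by
  have h0 : ((2 * n).choose (n + 1) : ℕ) = ((1 + X : Polynomial ℕ) ^ (2 * n)).coeff (n + 1) := by
    rw [coeff_one_add_X_pow]; rfl
  rw [h0, pow_mul]
  have h1 : ((1 + X : Polynomial ℕ) ^ 2) = (1 + X ^ 2) + 2 * X := by ring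
  rw [h1, add_pow, Polynomial.finset_sum_coeff]
  have hterm : ∀ k ∈ Finset.range (n + 1),
      (((1 + X ^ 2 : Polynomial ℕ)) ^ k * (2 * X) ^ (n - k) *
          (n.choose k : Polynomial ℕ)).coeff (n + 1)
        = (if 2 ∣ (k + 1) then k.choose ((k + 1) / 2) else 0) * 2 ^ (n - k) * n.choose k := by
    intro k hk
    have hkn : k ≤ n := Nat.lt_succ_iff.mp (Finset.mem_range.mp hk)
    have h2 : ((2 : Polynomial ℕ) * X) ^ (n - k) = C (2 ^ (n - k)) * X ^ (n - k) := by
      rw [mul_pow, map_pow]; norm_num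
    have h4 : ((n.choose k : Polynomial ℕ)) = C (n.choose k) := (C_eq_natCast _).symm
    rw [h2, h4]
    have h3 : (1 + X ^ 2 : Polynomial ℕ) ^ k * (C (2 ^ (n - k)) * X ^ (n - k)) * C (n.choose k)
        = C (2 ^ (n - k)) * (C (n.choose k) * (X ^ (n - k) * (1 + X ^ 2) ^ k)) := by ring
    rw [h3, coeff_C_mul, coeff_C_mul, show n + 1 = (k + 1) + (n - k) by omega,
      coeff_X_pow_mul, coeff_one_add_X_sq_pow]
    ring
  rw [Finset.sum_congr rfl hterm]
  have h5 : ∀ k, (if 2 ∣ (k + 1) then k.choose ((k + 1) / 2) else 0) * 2 ^ (n - k) * n.choose k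
      = if 2 ∣ (k + 1) then k.choose ((k + 1) / 2) * 2 ^ (n - k) * n.choose k else 0 := by
    intro k; split <;> simp
  rw [Finset.sum_congr rfl (fun k _ => h5 k), ← Finset.sum_filter]
  symm
  apply Finset.sum_nbij' (i := fun k => (k + 1) / 2) (j := fun m => 2 * m - 1)
  · intro k hk
    simp only [Finset.mem_filter, Finset.mem_range] at hk
    simp only [Finset.mem_Icc]
    omega
  · intro m hm
    simp only [Finset.mem_Icc] at hm
    simp only [Finset.mem_filter, Finset.mem_range]
    omega
  · intro k hk; simp only [Finset.mem_filter, Finset.mem_range] at hk; omega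
  · intro m hm; simp only [Finset.mem_Icc] at hm; omega
  · intro k hk
    simp only [Finset.mem_filter, Finset.mem_range] at hk
    obtain ⟨hkn, hdvd⟩ := hk
    obtain ⟨m, hm⟩ := hdvd
    have hk2 : k = 2 * m - 1 := by omega
    subst hk2
    have hm1 : 1 ≤ m := by omega
    have e1 : (2 * m - 1 + 1) / 2 = m := by omega
    have e2 : n - (2 * m - 1) = n + 1 - 2 * m := by omega
    have e3 : 2 * m - 1 - m = m - 1 := by omega
    have h2mn : 2 * m - 1 ≤ n := by omega
    have hc : n.choose (2 * m - 1) * (2 * m - 1).choose m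
        = n.choose m * (n - m).choose (m - 1) := by
      rw [Nat.choose_mul (n := n) (k := 2 * m - 1) (s := m) (by omega), e3]
    rw [e1, e2]
    calc (2 * m - 1).choose m * 2 ^ (n + 1 - 2 * m) * n.choose (2 * m - 1)
        = n.choose (2 * m - 1) * (2 * m - 1).choose m * 2 ^ (n + 1 - 2 * m) := by ring
      _ = n.choose m * (n - m).choose (m - 1) * 2 ^ (n + 1 - 2 * m) := by rw [hc]

theorem catalan_binomial_identity (n : ℕ) (hn : 1 ≤ n) :
    n * catalan n =
      ∑ k ∈ Finset.Icc 1 ((n + 1) / 2),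
        Nat.choose n k * Nat.choose (n - k) (k - 1) * 2 ^ (n + 1 - 2 * k) := by
  rw [sum_eq_choose n hn]
  apply Nat.eq_of_mul_eq_mul_left (show 0 < n + 1 by omega)
  calc (n + 1) * (n * catalan n) = n * ((n + 1) * catalan n) := by ring
    _ = n * (2 * n).choose n := by rw [succ_mul_catalan_eq_centralBinom]; rfl
    _ = (n + 1) * (2 * n).choose (n + 1) := by
        have h := Nat.choose_succ_right_eq (2 * n) n
        have h2 : 2 * n - n = n := by omega
        rw [h2] at h
        rw [mul_comm n, mul_comm (n + 1)]
        exact h.symm
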